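/- For the free group F_2 = ⟨g⟩ * ⟨h⟩ with the (non-standard) symmetric generating set {g, g⁻¹, h, h⁻¹, g·h⁻¹, h·g⁻¹}, the number of elements of word length exactly r ≥ 1 is 6·4^(r-1). -/

import Mathlib

/-- The two standard generators of the free group `F₂`. -/
def fgG : FreeGroup (Fin 2) := FreeGroup.of 0
def fgH : FreeGroup (Fin 2) := FreeGroup.of 1

/-- The non-standard symmetric generating set `{g, g⁻¹, h, h⁻¹, g·h⁻¹, h·g⁻¹}` of `F₂`. -/
def genS : Set (FreeGroup (Fin 2)) := {fgG, fgG⁻¹, fgH, fgH⁻¹, fgG * fgH⁻¹, fgH * fgG⁻¹}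

/-- Word length with respect to the generating set `genS`: the least `n` such that `x`
is a product of `n` elements of `genS`. -/
noncomputable def wlen (x : FreeGroup (Fin 2)) : ℕ :=
  sInf {n : ℕ | ∃ l : List (FreeGroup (Fin 2)),
    l.length = n ∧ (∀ y ∈ l, y ∈ genS) ∧ l.prod = x}

abbrev Ltr := Fin 2 × Bool

/-- pattern pair: (g,h⁻¹) or (h,g⁻¹) -/
def isPat (p q : Ltr) : Bool := p.2 && !q.2 && (p.1 != q.1)

/-- reducedness adjacency (matches `FreeGroup.reduce`'s cancellation test) -/
def Rp (p q : Ltr) : Prop := ¬(p.1 = q.1 ∧ p.2 = !q.2)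

instance (p q : Ltr) : Decidable (Rp p q) :=
  inferInstanceAs (Decidable ¬(p.1 = q.1 ∧ p.2 = !q.2))

def Rd (w : List Ltr) : Prop := List.Chain' Rp w

inductive Blk | a | A | b | B | ab | ba
deriving DecidableEq

instance : Fintype Blk :=
  ⟨⟨([Blk.a, Blk.A, Blk.b, Blk.B, Blk.ab, Blk.ba] : List Blk), by decide⟩,
    fun x => by cases x <;> decide⟩

def Blk.w : Blk → List Ltr
  | .a => [(0, true)] | .A => [(0, false)] | .b => [(1, true)] | .B => [(1, false)]
  | .ab => [(0, true), (1, false)] | .ba => [(1, true), (0, false)]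

def Blk.fst : Blk → Ltr
  | .a => (0, true) | .A => (0, false) | .b => (1, true) | .B => (1, false)
  | .ab => (0, true) | .ba => (1, true)

def Blk.lst : Blk → Ltr
  | .a => (0, true) | .A => (0, false) | .b => (1, true) | .B => (1, false)
  | .ab => (1, false) | .ba => (0, false)

def okL (p q : Ltr) : Bool := !((p.1 == q.1) && (p.2 == !q.2)) && !(isPat p q)

def E (x y : Blk) : Bool := okL x.lst y.fst

def bOf (p : Ltr) : Blk :=
  if p.1 = 0 then (if p.2 then .a else .A) else (if p.2 then .b else .B)

def b2Of (p _q : Ltr) : Blk := if p.1 = 0 then .ab else .ba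

def parse : List Ltr → List Blk
  | [] => []
  | [p] => [bOf p]
  | p :: q :: t => if isPat p q then b2Of p q :: parse t else bOf p :: parse (q :: t)

def dec (l : List Blk) : List Ltr := (l.map Blk.w).flatten

-- decidable basic facts
lemma bOf_w : ∀ p : Ltr, (bOf p).w = [p] := by decide
lemma b2Of_w : ∀ p q : Ltr, isPat p q = true → (b2Of p q).w = [p, q] := by decide
lemma bOf_fst : ∀ p : Ltr, (bOf p).fst = p := by decide
lemma bOf_lst : ∀ p : Ltr, (bOf p).lst = p := by decide
lemma b2Of_fst : ∀ p q : Ltr, isPat p q = true → (b2Of p q).fst = p := by decide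
lemma b2Of_lst : ∀ p q : Ltr, isPat p q = true → (b2Of p q).lst = q := by decide
lemma blk_w_head : ∀ x : Blk, x.w.head? = some x.fst := by decide
lemma blk_w_last : ∀ x : Blk, x.w.getLast? = some x.lst := by decide
lemma blk_w_chain : ∀ x : Blk, List.Chain' Rp x.w := by
  intro x
  cases x <;> first
    | exact List.isChain_singleton _
    | exact List.isChain_pair.mpr (by decide)
lemma okL_iff : ∀ p q : Ltr, okL p q = true ↔ (Rp p q ∧ isPat p q = false) := by decide
lemma isPat_snd : ∀ p q : Ltr, isPat p q = true → p.2 = true ∧ q.2 = false ∧ p.1 ≠ q.1 := by decide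
lemma isPat_false_of_snd : ∀ p q : Ltr, p.2 = false → isPat p q = false := by decide

lemma dec_nil : dec [] = [] := rfl
lemma dec_cons (x : Blk) (l : List Blk) : dec (x :: l) = x.w ++ dec l := rfl

lemma dec_parse : ∀ w : List Ltr, dec (parse w) = w := by
  intro w
  induction w using parse.induct with
  | case1 => rfl
  | case2 p => simp [parse, dec_cons, bOf_w, dec_nil]
  | case3 p q t hpat ih => simp [parse, hpat, dec_cons, b2Of_w p q hpat, ih]
  | case4 p q t hpat ih =>
    simp only [parse, hpat, if_neg, Bool.false_eq_true, ite_false, dec_cons, bOf_w, ih]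
    rfl

lemma parse_len (n : ℕ) : ∀ w : List Ltr, w.length ≤ n →
    (∀ p, (parse (p :: w)).length ≤ (parse w).length + 1) ∧
    (∀ q, (parse w).length ≤ (parse (q :: w)).length) := by
  induction n with
  | zero =>
    intro w hw
    have : w = [] := List.length_eq_zero_iff.mp (Nat.le_zero.mp hw)
    subst this
    exact ⟨fun p => by simp [parse], fun q => by simp [parse]⟩
  | succ n ih =>
    intro w hw
    constructor
    · intro p
      match w with
      | [] => simp [parse]
      | q :: t =>
        have ht : t.length ≤ n := by simpa using Nat.lt_succ_iff.mp (Nat.lt_of_lt_of_le (by simp) hw)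
        rw [parse]
        by_cases hp : isPat p q = true
        · rw [if_pos hp]
          have := (ih t ht).2 q
          simpa using Nat.add_le_add_right this 1
        · rw [if_neg hp]
          simp
    · intro q
      match w with
      | [] => simp [parse]
      | r :: t =>
        have ht : t.length ≤ n := by simpa using Nat.lt_succ_iff.mp (Nat.lt_of_lt_of_le (by simp) hw)
        rw [parse]
        by_cases hp : isPat q r = true
        · rw [if_pos hp]
          have := (ih t ht).1 r
          simpa using this
        · rw [if_neg hp]
          simp

lemma parse_len_cons (w : List Ltr) (p : Ltr) :
    (parse (p :: w)).length ≤ (parse w).length + 1 :=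
  (parse_len w.length w le_rfl).1 p

lemma parse_len_mono (w : List Ltr) (q : Ltr) :
    (parse w).length ≤ (parse (q :: w)).length :=
  (parse_len w.length w le_rfl).2 q

lemma parse_head : ∀ w : List Ltr, (parse w).head?.map Blk.fst = w.head? := by
  intro w
  match w with
  | [] => rfl
  | [p] => simp [parse, bOf_fst]
  | p :: q :: t =>
    rw [parse]
    by_cases hp : isPat p q = true
    · rw [if_pos hp]; simp [b2Of_fst p q hp]
    · rw [if_neg hp]; simp [bOf_fst]

lemma head_mem_fst {w : List Ltr} {y : Blk} (hy : y ∈ (parse w).head?) :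
    w.head? = some y.fst := by
  have h := parse_head w
  cases hp : (parse w).head? with
  | none => rw [hp] at hy; simp at hy
  | some z =>
    rw [hp] at hy h
    simp only [Option.mem_def, Option.some_inj] at hy
    subst hy
    simpa using h.symm

/-- parse of a reduced word is an `E`-chain -/
lemma chain_parse : ∀ w : List Ltr, Rd w → List.Chain' (fun x y => E x y = true) (parse w) := by
  intro w
  induction w using parse.induct with
  | case1 => intro _; simp [parse, List.Chain']
  | case2 p => intro _; simp [parse, List.Chain']
  | case3 p q t hpat ih =>
    intro hrd
    rw [parse, if_pos hpat]
    unfold List.Chain'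
    rw [List.isChain_cons]
    refine ⟨?_, ih (hrd.tail.tail)⟩
    intro y hy
    match t, hy with
    | r :: t', hy =>
      have hfst : y.fst = r := by
        have := head_mem_fst hy
        simp only [List.head?_cons, Option.some_inj] at this
        exact this.symm
      have hq : (b2Of p q).lst = q := b2Of_lst p q hpat
      have hqr : Rp q r := (List.isChain_cons_cons.mp hrd.tail).1
      have hq2 : q.2 = false := (isPat_snd p q hpat).2.1
      unfold E
      rw [hq, hfst]
      exact (okL_iff q r).mpr ⟨hqr, isPat_false_of_snd q r hq2⟩
  | case4 p q t hpat ih =>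
    intro hrd
    rw [parse, if_neg hpat]
    unfold List.Chain'
    rw [List.isChain_cons]
    refine ⟨?_, ih hrd.tail⟩
    intro y hy
    have hfst : y.fst = q := by
      have := head_mem_fst hy
      simp only [List.head?_cons, Option.some_inj] at this
      exact this.symm
    have hpq : Rp p q := (List.isChain_cons_cons.mp hrd).1
    unfold E
    rw [bOf_lst, hfst]
    exact (okL_iff p q).mpr ⟨hpq, by simpa using hpat⟩

lemma dec_head : ∀ l : List Blk, (dec l).head? = l.head?.map Blk.fst := by
  intro l
  cases l with
  | nil => rfl
  | cons x l' =>
    rw [dec_cons]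
    rw [List.head?_append]
    simp [blk_w_head x]

lemma parse_single_cons (p : Ltr) (v : List Ltr)
    (hv : ∀ q ∈ v.head?, okL p q = true) : parse (p :: v) = bOf p :: parse v := by
  cases v with
  | nil => simp [parse]
  | cons q t =>
    rw [parse, if_neg]
    have := (okL_iff p q).mp (hv q rfl)
    simp [this.2]

lemma parse_pat_cons (p q : Ltr) (v : List Ltr) (h : isPat p q = true) :
    parse (p :: q :: v) = b2Of p q :: parse v := by
  rw [parse, if_pos h]

lemma parse_block_cons (x : Blk) (v : List Ltr)
    (hv : ∀ q ∈ v.head?, okL x.lst q = true) : parse (x.w ++ v) = x :: parse v := by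
  cases x with
  | a => rw [show Blk.a.w ++ v = ((0, true) : Ltr) :: v from rfl,
      parse_single_cons _ _ (by exact hv), show bOf (0, true) = Blk.a by decide]
  | A => rw [show Blk.A.w ++ v = ((0, false) : Ltr) :: v from rfl,
      parse_single_cons _ _ (by exact hv), show bOf (0, false) = Blk.A by decide]
  | b => rw [show Blk.b.w ++ v = ((1, true) : Ltr) :: v from rfl,
      parse_single_cons _ _ (by exact hv), show bOf (1, true) = Blk.b by decide]
  | B => rw [show Blk.B.w ++ v = ((1, false) : Ltr) :: v from rfl,
      parse_single_cons _ _ (by exact hv), show bOf (1, false) = Blk.B by decide]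
  | ab => rw [show Blk.ab.w ++ v = ((0, true) : Ltr) :: ((1, false) : Ltr) :: v from rfl,
      parse_pat_cons _ _ _ (by decide), show b2Of (0, true) (1, false) = Blk.ab by decide]
  | ba => rw [show Blk.ba.w ++ v = ((1, true) : Ltr) :: ((0, false) : Ltr) :: v from rfl,
      parse_pat_cons _ _ _ (by decide), show b2Of (1, true) (0, false) = Blk.ba by decide]

lemma parse_dec : ∀ l : List Blk, List.Chain' (fun x y => E x y = true) l →
    parse (dec l) = l := by
  intro l
  induction l with
  | nil => intro _; rfl
  | cons x l' ih =>
    intro h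
    rw [dec_cons, parse_block_cons x (dec l'), ih h.tail]
    intro q hq
    rw [dec_head l'] at hq
    match l', hq with
    | y :: l'', hq =>
      have hqy : y.fst = q := by simpa using hq
      rw [← hqy]
      exact (List.isChain_cons_cons.mp h).1

lemma rd_dec : ∀ l : List Blk, List.Chain' (fun x y => E x y = true) l → Rd (dec l) := by
  intro l
  induction l with
  | nil => intro _; exact List.isChain_nil
  | cons x l' ih =>
    intro h
    rw [dec_cons]
    refine List.isChain_append.mpr ⟨blk_w_chain x, ih h.tail, ?_⟩
    intro a ha b hb
    rw [blk_w_last x] at ha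
    simp only [Option.mem_def, Option.some_inj] at ha
    subst ha
    rw [dec_head l'] at hb
    match l', hb with
    | y :: l'', hb =>
      have hby : y.fst = b := by simpa using hb
      rw [← hby]
      have : E x y = true := (List.isChain_cons_cons.mp h).1
      exact ((okL_iff _ _).mp this).1

lemma reduce_self : ∀ w : List Ltr, Rd w → FreeGroup.reduce w = w := by
  intro w h
  induction w with
  | nil => rfl
  | cons p t ih =>
    rw [FreeGroup.reduce.cons, ih h.tail]
    cases t with
    | nil => rfl
    | cons q t' =>
      have hpq : Rp p q := (List.isChain_cons_cons.mp h).1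
      show (if p.1 = q.1 ∧ p.2 = !q.2 then t' else p :: q :: t') = p :: q :: t'
      rw [if_neg hpq]

lemma rd_of_reduce_self : ∀ w : List Ltr, FreeGroup.reduce w = w → Rd w := by
  intro w
  induction w with
  | nil => intro _; exact List.isChain_nil
  | cons p t ih =>
    intro h
    rw [FreeGroup.reduce.cons] at h
    cases hu : FreeGroup.reduce t with
    | nil =>
      rw [hu] at h
      simp only [List.cons.injEq] at h
      rw [← h.2]
      exact List.isChain_singleton p
    | cons y ys =>
      rw [hu] at h
      replace h : (if p.1 = y.1 ∧ p.2 = !y.2 then ys else p :: y :: ys) = p :: t := h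
      by_cases hc : p.1 = y.1 ∧ p.2 = !y.2
      · exfalso
        rw [if_pos hc] at h
        have hred : (FreeGroup.reduce t).length ≤ t.length :=
          FreeGroup.Red.length_le (FreeGroup.reduce.red)
        rw [hu] at hred
        have : ys.length = t.length + 1 := by rw [h]; simp
        simp at hred
        omega
      · rw [if_neg hc] at h
        simp only [List.cons.injEq, true_and] at h
        have ht : t = y :: ys := h.symm
        have : FreeGroup.reduce t = t := by rw [hu, ht]
        have hrt := ih this
        rw [ht]
        rw [ht] at hrt
        exact List.isChain_cons_cons.mpr ⟨hc, hrt⟩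

lemma rd_toWord (x : FreeGroup (Fin 2)) : Rd x.toWord :=
  rd_of_reduce_self _ (FreeGroup.reduce_toWord x)

/-- prepend a letter to a reduced word, keeping it reduced -/
def consL (p : Ltr) : List Ltr → List Ltr
  | [] => [p]
  | q :: t => if p.1 = q.1 ∧ p.2 = !q.2 then t else p :: q :: t

lemma mk_consL (p : Ltr) (w : List Ltr) :
    FreeGroup.mk (consL p w) = FreeGroup.mk [p] * FreeGroup.mk w := by
  cases w with
  | nil => rw [FreeGroup.mul_mk]; rfl
  | cons q t =>
    rw [FreeGroup.mul_mk]
    show FreeGroup.mk (if p.1 = q.1 ∧ p.2 = !q.2 then t else p :: q :: t) = _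
    by_cases hc : p.1 = q.1 ∧ p.2 = !q.2
    · rw [if_pos hc]
      have hq : q = (p.1, !p.2) := by
        obtain ⟨h1, h2⟩ := hc
        have h3 : q.2 = !p.2 := by rw [h2, Bool.not_not]
        obtain ⟨q1, q2⟩ := q
        simp_all
      have step : FreeGroup.Red.Step ([p] ++ q :: t) ([] ++ t) := by
        have : [p] ++ q :: t = [] ++ (p.1, p.2) :: (p.1, !p.2) :: t := by
          simp [hq]
        rw [this]
        exact FreeGroup.Red.Step.not
      exact (Quot.sound step).symm
    · rw [if_neg hc]; rfl

lemma rd_consL (p : Ltr) (w : List Ltr) (h : Rd w) : Rd (consL p w) := by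
  cases w with
  | nil => exact List.isChain_singleton p
  | cons q t =>
    show Rd (if p.1 = q.1 ∧ p.2 = !q.2 then t else p :: q :: t)
    by_cases hc : p.1 = q.1 ∧ p.2 = !q.2
    · rw [if_pos hc]; exact h.tail
    · rw [if_neg hc]; exact List.isChain_cons_cons.mpr ⟨hc, h⟩

lemma toWord_mul_single (p : Ltr) (x : FreeGroup (Fin 2)) :
    (FreeGroup.mk [p] * x).toWord = consL p x.toWord := by
  conv_lhs => rw [← FreeGroup.mk_toWord (x := x)]
  rw [← mk_consL, FreeGroup.toWord_mk]
  exact reduce_self _ (rd_consL p _ (rd_toWord x))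

/-- The length function: number of blocks in the parse of the reduced word. -/
noncomputable def flen (x : FreeGroup (Fin 2)) : ℕ := (parse x.toWord).length

lemma flen_one : flen 1 = 0 := by
  unfold flen
  rw [FreeGroup.toWord_one]
  rfl

lemma flen_single_le (p : Ltr) (x : FreeGroup (Fin 2)) :
    flen (FreeGroup.mk [p] * x) ≤ flen x + 1 := by
  unfold flen
  rw [toWord_mul_single]
  cases hw : x.toWord with
  | nil => simp [consL, parse]
  | cons q t =>
    show (parse (if p.1 = q.1 ∧ p.2 = !q.2 then t else p :: q :: t)).length ≤ _
    by_cases hc : p.1 = q.1 ∧ p.2 = !q.2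
    · rw [if_pos hc]
      have := parse_len_mono t q
      omega
    · rw [if_neg hc]
      exact parse_len_cons (q :: t) p

lemma fin2_cases : ∀ i j k : Fin 2, i ≠ j → k ≠ i → k = j := by decide

lemma flen_pat_le (p q : Ltr) (x : FreeGroup (Fin 2)) (hpq : isPat p q = true) :
    flen (FreeGroup.mk [p] * (FreeGroup.mk [q] * x)) ≤ flen x + 1 := by
  obtain ⟨hp2, hq2, hne⟩ := isPat_snd p q hpq
  unfold flen
  rw [toWord_mul_single, toWord_mul_single]
  cases hw : x.toWord with
  | nil =>
    show (parse (consL p [q])).length ≤ _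
    show (parse (if p.1 = q.1 ∧ p.2 = !q.2 then [] else [p, q])).length ≤ _
    rw [if_neg (fun hc => hne hc.1)]
    rw [parse_pat_cons p q [] hpq]
    simp [parse]
  | cons r t =>
    have hrd : Rd (r :: t) := hw ▸ rd_toWord x
    show (parse (consL p (if q.1 = r.1 ∧ q.2 = !r.2 then t else q :: r :: t))).length ≤ _
    by_cases hc1 : q.1 = r.1 ∧ q.2 = !r.2
    · rw [if_pos hc1]
      cases t with
      | nil =>
        show (parse [p]).length ≤ _
        simp [parse]
      | cons u t' =>
        show (parse (if p.1 = u.1 ∧ p.2 = !u.2 then t' else p :: u :: t')).length ≤ _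
        by_cases hc2 : p.1 = u.1 ∧ p.2 = !u.2
        · rw [if_pos hc2]
          have h1 := parse_len_mono t' u
          have h2 := parse_len_mono (u :: t') r
          omega
        · rw [if_neg hc2]
          have hpu : isPat p u = false := by
            by_contra hcon
            have hpu' : isPat p u = true := by simpa using hcon
            obtain ⟨_, hu2, hneu⟩ := isPat_snd p u hpu'
            have hr2 : r.2 = true := by
              have := hc1.2
              rw [hq2] at this
              simpa using this.symm
            have hu1 : u.1 = q.1 := fin2_cases p.1 q.1 u.1 hne (Ne.symm hneu)
            have hru : Rp r u := (List.isChain_cons_cons.mp hrd).1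
            exact hru ⟨(hu1.trans hc1.1).symm, by simp [hr2, hu2]⟩
          rw [parse_single_cons p (u :: t') (by
            intro y hy
            simp only [List.head?_cons, Option.mem_def, Option.some_inj] at hy
            subst hy
            refine (okL_iff p u).mpr ⟨fun hcc => hc2 hcc, hpu⟩)]
          have h2 := parse_len_mono (u :: t') r
          simp only [List.length_cons]
          omega
    · rw [if_neg hc1]
      show (parse (if p.1 = q.1 ∧ p.2 = !q.2 then r :: t else p :: q :: r :: t)).length ≤ _
      rw [if_neg (fun hc => hne hc.1)]
      rw [parse_pat_cons p q (r :: t) hpq]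
      simp

lemma fgG_mk : fgG = FreeGroup.mk [((0 : Fin 2), true)] := rfl
lemma fgH_mk : fgH = FreeGroup.mk [((1 : Fin 2), true)] := rfl
lemma fgGi_mk : fgG⁻¹ = FreeGroup.mk [((0 : Fin 2), false)] := by
  rw [fgG_mk, FreeGroup.inv_mk]; rfl
lemma fgHi_mk : fgH⁻¹ = FreeGroup.mk [((1 : Fin 2), false)] := by
  rw [fgH_mk, FreeGroup.inv_mk]; rfl
lemma fgGHi_mk : fgG * fgH⁻¹ = FreeGroup.mk [((0 : Fin 2), true), ((1 : Fin 2), false)] := by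
  rw [fgG_mk, fgHi_mk, FreeGroup.mul_mk]; rfl
lemma fgHGi_mk : fgH * fgG⁻¹ = FreeGroup.mk [((1 : Fin 2), true), ((0 : Fin 2), false)] := by
  rw [fgH_mk, fgGi_mk, FreeGroup.mul_mk]; rfl

lemma flen_step (s : FreeGroup (Fin 2)) (hs : s ∈ genS) (x : FreeGroup (Fin 2)) :
    flen (s * x) ≤ flen x + 1 := by
  simp only [genS, Set.mem_insert_iff, Set.mem_singleton_iff] at hs
  rcases hs with rfl | rfl | rfl | rfl | rfl | rfl
  · rw [fgG_mk]; exact flen_single_le _ x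
  · rw [fgGi_mk]; exact flen_single_le _ x
  · rw [fgH_mk]; exact flen_single_le _ x
  · rw [fgHi_mk]; exact flen_single_le _ x
  · rw [fgGHi_mk,
      show FreeGroup.mk [((0 : Fin 2), true), ((1 : Fin 2), false)] =
        FreeGroup.mk [((0 : Fin 2), true)] * FreeGroup.mk [((1 : Fin 2), false)] from
        (FreeGroup.mul_mk (L₁ := [_]) (L₂ := [_])).symm, mul_assoc]
    exact flen_pat_le _ _ x (by decide)
  · rw [fgHGi_mk,
      show FreeGroup.mk [((1 : Fin 2), true), ((0 : Fin 2), false)] =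
        FreeGroup.mk [((1 : Fin 2), true)] * FreeGroup.mk [((0 : Fin 2), false)] from
        (FreeGroup.mul_mk (L₁ := [_]) (L₂ := [_])).symm, mul_assoc]
    exact flen_pat_le _ _ x (by decide)

lemma flen_prod_le : ∀ l : List (FreeGroup (Fin 2)), (∀ y ∈ l, y ∈ genS) →
    flen l.prod ≤ l.length := by
  intro l
  induction l with
  | nil => intro _; simp [flen_one]
  | cons s l' ih =>
    intro h
    rw [List.prod_cons]
    have h1 := flen_step s (h s (by simp)) l'.prod
    have h2 := ih (fun y hy => h y (by simp [hy]))
    simp only [List.length_cons]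
    omega

lemma toF_mem : ∀ bl : Blk, FreeGroup.mk bl.w ∈ genS := by
  intro bl
  cases bl with
  | a => exact Or.inl fgG_mk.symm
  | A => exact Or.inr (Or.inl fgGi_mk.symm)
  | b => exact Or.inr (Or.inr (Or.inl fgH_mk.symm))
  | B => exact Or.inr (Or.inr (Or.inr (Or.inl fgHi_mk.symm)))
  | ab => exact Or.inr (Or.inr (Or.inr (Or.inr (Or.inl fgGHi_mk.symm))))
  | ba => exact Or.inr (Or.inr (Or.inr (Or.inr (Or.inr fgHGi_mk.symm))))

lemma prod_map_mk : ∀ l : List Blk,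
    (l.map (fun bl => FreeGroup.mk bl.w)).prod = FreeGroup.mk (dec l) := by
  intro l
  induction l with
  | nil => simp [dec_nil, FreeGroup.one_eq_mk]
  | cons x l' ih => rw [List.map_cons, List.prod_cons, ih, FreeGroup.mul_mk, dec_cons]

lemma wlen_eq_flen (x : FreeGroup (Fin 2)) : wlen x = flen x := by
  have hmem : flen x ∈ {n : ℕ | ∃ l : List (FreeGroup (Fin 2)),
      l.length = n ∧ (∀ y ∈ l, y ∈ genS) ∧ l.prod = x} := by
    refine ⟨(parse x.toWord).map (fun bl => FreeGroup.mk bl.w), by simp [flen], ?_, ?_⟩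
    · intro y hy
      simp only [List.mem_map] at hy
      obtain ⟨bl, _, rfl⟩ := hy
      exact toF_mem bl
    · rw [prod_map_mk, dec_parse, FreeGroup.mk_toWord]
  refine le_antisymm (Nat.sInf_le hmem) ?_
  obtain ⟨l, hlen, hmemS, hprod⟩ := Nat.sInf_mem (⟨flen x, hmem⟩ : Set.Nonempty _)
  calc flen x = flen l.prod := by rw [hprod]
    _ ≤ l.length := flen_prod_le l hmemS
    _ = _ := hlen

/-- the 4 allowed predecessors of each block -/
def predf (y : Blk) (i : Fin 4) : Blk :=
  match y, (i : ℕ) with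
  | .a, 0 => .a | .a, 1 => .b | .a, 2 => .B | .a, _ => .ab
  | .A, 0 => .A | .A, 1 => .B | .A, 2 => .ab | .A, _ => .ba
  | .b, 0 => .a | .b, 1 => .A | .b, 2 => .b | .b, _ => .ba
  | .B, 0 => .A | .B, 1 => .B | .B, 2 => .ab | .B, _ => .ba
  | .ab, 0 => .a | .ab, 1 => .b | .ab, 2 => .B | .ab, _ => .ab
  | .ba, 0 => .a | .ba, 1 => .A | .ba, 2 => .b | .ba, _ => .ba

def idxf (x y : Blk) : Fin 4 :=
  match y, x with
  | .a, .a => 0 | .a, .b => 1 | .a, .B => 2 | .a, _ => 3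
  | .A, .A => 0 | .A, .B => 1 | .A, .ab => 2 | .A, _ => 3
  | .b, .a => 0 | .b, .A => 1 | .b, .b => 2 | .b, _ => 3
  | .B, .A => 0 | .B, .B => 1 | .B, .ab => 2 | .B, _ => 3
  | .ab, .a => 0 | .ab, .b => 1 | .ab, .B => 2 | .ab, _ => 3
  | .ba, .a => 0 | .ba, .A => 1 | .ba, .b => 2 | .ba, _ => 3

lemma predf_E : ∀ (y : Blk) (i : Fin 4), E (predf y i) y = true := by decide
lemma predf_idxf : ∀ x y : Blk, E x y = true → predf y (idxf x y) = x := by decide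
lemma idxf_predf : ∀ (y : Blk) (i : Fin 4), idxf (predf y i) y = i := by decide

def Ap (m : ℕ) : Type :=
  {p : Blk × List Blk //
    List.Chain' (fun x y => E x y = true) (p.1 :: p.2) ∧ p.2.length = m}

def chainT (m : ℕ) : Type :=
  {l : List Blk // List.Chain' (fun x y => E x y = true) l ∧ l.length = m}

def e0 : Ap 0 ≃ Blk where
  toFun := fun z => z.1.1
  invFun := fun x => ⟨(x, []), List.isChain_singleton x, rfl⟩
  left_inv := by
    rintro ⟨⟨x, l⟩, h⟩
    have : l = [] := List.length_eq_zero_iff.mp h.2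
    subst this
    rfl
  right_inv := fun x => rfl

def eSto (m : ℕ) : Ap (m + 1) → Ap m × Fin 4 := fun z =>
  match z with
  | ⟨(x, y :: t), h⟩ =>
      (⟨(y, t), (List.isChain_cons_cons.mp h.1).2, Nat.succ_injective (by simpa using h.2)⟩,
        idxf x y)
  | ⟨(_, []), h⟩ => absurd h.2 (by simp)

def eSinv (m : ℕ) : Ap m × Fin 4 → Ap (m + 1) := fun z =>
  ⟨(predf z.1.1.1 z.2, z.1.1.1 :: z.1.1.2),
    List.isChain_cons_cons.mpr ⟨predf_E _ _, z.1.2.1⟩, by simp [z.1.2.2]⟩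

def eS (m : ℕ) : Ap (m + 1) ≃ Ap m × Fin 4 where
  toFun := eSto m
  invFun := eSinv m
  left_inv := by
    rintro ⟨⟨x, l⟩, h⟩
    match l, h with
    | y :: t, h =>
      show eSinv m (eSto m ⟨(x, y :: t), h⟩) = _
      rw [show eSto m ⟨(x, y :: t), h⟩ =
        (⟨(y, t), (List.isChain_cons_cons.mp h.1).2, Nat.succ_injective (by simpa using h.2)⟩,
          idxf x y) from rfl]
      unfold eSinv
      apply Subtype.ext
      show (predf y (idxf x y), y :: t) = (x, y :: t)
      rw [predf_idxf x y (List.isChain_cons_cons.mp h.1).1]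
  right_inv := by
    rintro ⟨⟨⟨y, t⟩, h⟩, i⟩
    have he : eSto m (eSinv m (⟨⟨(y, t), h⟩, i⟩)) =
        (⟨(y, t), h⟩, idxf (predf y i) y) := rfl
    rw [he, idxf_predf]

lemma card_Ap : ∀ m : ℕ, Nat.card (Ap m) = 6 * 4 ^ m := by
  intro m
  induction m with
  | zero =>
    rw [Nat.card_congr e0, Nat.card_eq_fintype_card]
    rfl
  | succ n ih =>
    rw [Nat.card_congr (eS n), Nat.card_prod, ih, Nat.card_eq_fintype_card,
      Fintype.card_fin]
    ring

def e2 (m : ℕ) : chainT (m + 1) ≃ Ap m where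
  toFun := fun z =>
    match z with
    | ⟨y :: t, h⟩ => ⟨(y, t), h.1, Nat.succ_injective (by simpa using h.2)⟩
    | ⟨[], h⟩ => absurd h.2 (by simp)
  invFun := fun z => ⟨z.1.1 :: z.1.2, z.2.1, by simp [z.2.2]⟩
  left_inv := by
    rintro ⟨l, h⟩
    match l, h with
    | y :: t, h => rfl
  right_inv := by rintro ⟨⟨y, t⟩, h⟩; rfl

def e1 (m : ℕ) : {x : FreeGroup (Fin 2) // wlen x = m} ≃ chainT m where
  toFun := fun z =>
    ⟨parse z.1.toWord, chain_parse _ (rd_toWord z.1), by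
      have := z.2
      rw [wlen_eq_flen] at this
      exact this⟩
  invFun := fun z =>
    ⟨FreeGroup.mk (dec z.1), by
      rw [wlen_eq_flen]
      unfold flen
      rw [FreeGroup.toWord_mk, reduce_self _ (rd_dec _ z.2.1), parse_dec _ z.2.1]
      exact z.2.2⟩
  left_inv := by
    rintro ⟨x, h⟩
    apply Subtype.ext
    show FreeGroup.mk (dec (parse x.toWord)) = x
    rw [dec_parse, FreeGroup.mk_toWord]
  right_inv := by
    rintro ⟨l, h⟩
    apply Subtype.ext
    show parse (FreeGroup.mk (dec l)).toWord = l
    rw [FreeGroup.toWord_mk, reduce_self _ (rd_dec _ h.1), parse_dec _ h.1]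

/-- For `F₂` with the generating set `{g, g⁻¹, h, h⁻¹, g·h⁻¹, h·g⁻¹}`, the number of
elements of word length exactly `r ≥ 1` is `6·4^(r-1)`. -/
theorem freeGroup_two_sphere_card (r : ℕ) (hr : 1 ≤ r) :
    Set.ncard {x : FreeGroup (Fin 2) | wlen x = r} = 6 * 4 ^ (r - 1) := by
  obtain ⟨m, rfl⟩ : ∃ m, r = m + 1 := ⟨r - 1, (Nat.succ_pred_eq_of_pos hr).symm⟩
  rw [← Nat.card_coe_set_eq]
  have hcard : Nat.card ↥{x : FreeGroup (Fin 2) | wlen x = m + 1} = Nat.card (Ap m) :=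
    Nat.card_congr ((e1 (m + 1)).trans (e2 m))
  rw [hcard, card_Ap]
  simp
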